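/- Let G be a finite simple connected graph that contains exactly one cycle, and suppose that cycle is a 3-cycle. If G contains neither I nor R as a minor, then there exists m ∈ ℕ such that G is isomorphic to a subgraph of W_m, the graph obtained from a 3-cycle by attaching to each of its three vertices a pendant path with m edges. (This is the combinatorial core of the forward direction of the paper's classification of projective planar products G □ C_3.) -/

import Mathlib

/-- `H` is a minor of `G`: there is an assignment of pairwise disjoint, connected,
nonempty branch sets in `G` to the vertices of `H`, with an edge of `G` between the
branch sets of any two adjacent vertices of `H`. -/
def SimpleGraph.IsMinorOf {W V : Type*} (H : SimpleGraph W) (G : SimpleGraph V) : Prop :=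
  ∃ φ : W → Set V,
    (∀ w, (G.induce (φ w)).Connected) ∧
    (Pairwise fun w w' => Disjoint (φ w) (φ w')) ∧
    ∀ ⦃w w'⦄, H.Adj w w' → ∃ a ∈ φ w, ∃ b ∈ φ w', G.Adj a b

/-- The graph `I`: the six-vertex double star obtained from an edge `uv` by attaching
two pendant vertices to `u` and two pendant vertices to `v`. -/
def GraphI : SimpleGraph (Fin 6) :=
  SimpleGraph.fromEdgeSet {s(0, 1), s(0, 2), s(0, 3), s(1, 4), s(1, 5)}

/-- The graph `R`: the five-vertex graph obtained from a 3-cycle on `{0,1,2}` by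
attaching two pendant vertices `3`, `4` to the vertex `0` of the cycle. -/
def GraphR : SimpleGraph (Fin 5) :=
  SimpleGraph.fromEdgeSet {s(0, 1), s(1, 2), s(0, 2), s(0, 3), s(0, 4)}

/-- The graph `W_m`: a 3-cycle with a pendant path with `m` edges attached to each of
its three vertices, the three attached paths being pairwise disjoint.  The vertex
`Sum.inl i` is the `i`-th cycle vertex, and `Sum.inr (i, j)` is the `(j+1)`-st vertex
along the path attached to the `i`-th cycle vertex. -/
def GraphW (m : ℕ) : SimpleGraph (Fin 3 ⊕ Fin 3 × Fin m) :=
  SimpleGraph.fromRel fun a b =>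
    match a, b with
    | Sum.inl i, Sum.inl j => i ≠ j
    | Sum.inl i, Sum.inr (i', j) => i = i' ∧ (j : ℕ) = 0
    | Sum.inr (i, j), Sum.inr (i', j') => i = i' ∧ (j : ℕ) + 1 = (j' : ℕ)
    | _, _ => False

/-- A subgraph of `G` is a cycle if its coercion is isomorphic to a cycle graph `C_n`
with `n ≥ 3`. -/
def SimpleGraph.Subgraph.IsCycleSubgraph {V : Type*} {G : SimpleGraph V}
    (H : G.Subgraph) : Prop :=
  ∃ n : ℕ, 3 ≤ n ∧ Nonempty (H.coe ≃g SimpleGraph.cycleGraph n)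

open SimpleGraph

private lemma induce_singleton_connected {V : Type*} (G : SimpleGraph V) (x : V) :
    (G.induce {x}).Connected := by
  refine (connected_iff _).mpr ⟨fun u v => ?_, ⟨⟨x, rfl⟩⟩⟩
  have : u = v := Subtype.ext (by rw [u.2, v.2])
  rw [this]

private lemma graphR_minor {V : Type*} {G : SimpleGraph V} {S : Set V} {u v t1 t2 x y : V}
    (hS : (G.induce S).Connected) (hu : u ∈ S) (hv : v ∈ S)
    (ht1 : t1 ∉ S) (ht2 : t2 ∉ S) (hx : x ∉ S) (hy : y ∉ S)
    (h12 : t1 ≠ t2) (h1x : t1 ≠ x) (h1y : t1 ≠ y) (h2x : t2 ≠ x) (h2y : t2 ≠ y) (hxy : x ≠ y)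
    (hut1 : G.Adj u t1) (hut2 : G.Adj u t2) (ht12 : G.Adj t1 t2)
    (hvx : G.Adj v x) (hvy : G.Adj v y) : GraphR.IsMinorOf G := by
  refine ⟨![S, {t1}, {t2}, {x}, {y}], ?_, ?_, ?_⟩
  · intro w
    fin_cases w <;> simp only [Matrix.cons_val_zero, Matrix.cons_val_one, Matrix.head_cons,
      Matrix.cons_val_two, Matrix.tail_cons, Matrix.cons_val_three, Matrix.cons_val_four] <;>
      first | exact hS | apply induce_singleton_connected
  · intro i j hij
    fin_cases i <;> fin_cases j <;>
      simp_all [Set.disjoint_singleton_right, Set.disjoint_singleton_left,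
        Set.disjoint_singleton] <;> tauto
  · intro w w' h
    fin_cases w <;> fin_cases w' <;>
      simp only [GraphR, fromEdgeSet_adj, Set.mem_insert_iff, Set.mem_singleton_iff,
        Sym2.eq_iff] at h <;>
      simp only [Matrix.cons_val_zero, Matrix.cons_val_one, Matrix.head_cons,
        Matrix.cons_val_two, Matrix.tail_cons, Matrix.cons_val_three, Matrix.cons_val_four] <;>
      first
        | exact ⟨u, hu, t1, rfl, hut1⟩
        | exact ⟨t1, rfl, u, hu, hut1.symm⟩
        | exact ⟨u, hu, t2, rfl, hut2⟩
        | exact ⟨t2, rfl, u, hu, hut2.symm⟩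
        | exact ⟨t1, rfl, t2, rfl, ht12⟩
        | exact ⟨t2, rfl, t1, rfl, ht12.symm⟩
        | exact ⟨v, hv, x, rfl, hvx⟩
        | exact ⟨x, rfl, v, hv, hvx.symm⟩
        | exact ⟨v, hv, y, rfl, hvy⟩
        | exact ⟨y, rfl, v, hv, hvy.symm⟩
        | simp at h

private lemma walk_support_getElem {V : Type*} {G : SimpleGraph V} {u v : V} (p : G.Walk u v) :
    ∀ i : ℕ, i ≤ p.length → p.support[i]? = some (p.getVert i) := by
  induction p with
  | nil =>
    intro i hi
    have : i = 0 := by simpa using hi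
    subst this; simp
  | cons h q ih =>
    intro i hi
    cases i with
    | zero => simp
    | succ n =>
      rw [Walk.support_cons, List.getElem?_cons_succ, Walk.getVert_cons_succ]
      exact ih n (by simpa using hi)

private lemma cycle_getVert_inj {V : Type*} {G : SimpleGraph V} {x : V} {w : G.Walk x x}
    (hw : w.IsCycle) {i j : ℕ} (hi : i < w.length) (hj : j < w.length)
    (hij : w.getVert i = w.getVert j) : i = j := by
  have hnodup : w.support.tail.Nodup := hw.2
  have hlen : w.support.tail.length = w.length := by
    rw [List.length_tail, Walk.length_support]
    omega
  have htail : ∀ k : ℕ, k + 1 ≤ w.length → w.support.tail[k]? = some (w.getVert (k + 1)) := by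
    intro k hk
    have h1 := walk_support_getElem w (k + 1) hk
    rw [w.support_eq_cons, List.getElem?_cons_succ] at h1
    exact h1
  rcases Nat.eq_zero_or_pos i with rfl | hi0
  · rcases Nat.eq_zero_or_pos j with rfl | hj0
    · rfl
    · exfalso
      have h0 : w.getVert j = w.getVert w.length := by
        rw [Walk.getVert_length, ← hij, Walk.getVert_zero]
      have e1 : w.support.tail[j - 1]? = some (w.getVert j) := by
        have := htail (j - 1) (by omega); rwa [show j - 1 + 1 = j by omega] at this
      have e2 : w.support.tail[w.length - 1]? = some (w.getVert w.length) := by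
        have := htail (w.length - 1) (by omega)
        rwa [show w.length - 1 + 1 = w.length by omega] at this
      have := (List.getElem?_inj (i := j - 1) (by omega) hnodup).mp (e1.trans (h0 ▸ e2.symm))
      omega
  · rcases Nat.eq_zero_or_pos j with rfl | hj0
    · exfalso
      have h0 : w.getVert i = w.getVert w.length := by
        rw [Walk.getVert_length, hij, Walk.getVert_zero]
      have e1 : w.support.tail[i - 1]? = some (w.getVert i) := by
        have := htail (i - 1) (by omega); rwa [show i - 1 + 1 = i by omega] at this
      have e2 : w.support.tail[w.length - 1]? = some (w.getVert w.length) := by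
        have := htail (w.length - 1) (by omega)
        rwa [show w.length - 1 + 1 = w.length by omega] at this
      have := (List.getElem?_inj (i := i - 1) (by omega) hnodup).mp (e1.trans (h0 ▸ e2.symm))
      omega
    · have e1 : w.support.tail[i - 1]? = some (w.getVert i) := by
        have := htail (i - 1) (by omega); rwa [show i - 1 + 1 = i by omega] at this
      have e2 : w.support.tail[j - 1]? = some (w.getVert j) := by
        have := htail (j - 1) (by omega); rwa [show j - 1 + 1 = j by omega] at this
      have := (List.getElem?_inj (i := i - 1) (by omega) hnodup).mp (e1.trans (hij ▸ e2.symm))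
      omega

private lemma fin_cycle_adj {m : ℕ} {i j : Fin (m + 3)} :
    (cycleGraph (m + 3)).Adj i j ↔
      ((j : ℕ) = (i : ℕ) + 1 ∨ ((i : ℕ) = m + 2 ∧ (j : ℕ) = 0)) ∨
      ((i : ℕ) = (j : ℕ) + 1 ∨ ((j : ℕ) = m + 2 ∧ (i : ℕ) = 0)) := by
  have key : ∀ a b : Fin (m + 3),
      a - b = 1 ↔ ((a : ℕ) = (b : ℕ) + 1 ∨ ((b : ℕ) = m + 2 ∧ (a : ℕ) = 0)) := by
    intro a b
    have hb : (b : ℕ) < m + 3 := b.isLt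
    have ha : (a : ℕ) < m + 3 := a.isLt
    rw [sub_eq_iff_eq_add, Fin.ext_iff, Fin.add_def]
    simp only [Fin.val_one]
    rcases Nat.lt_or_ge ((b : ℕ) + 1) (m + 3) with hlt | hge
    · rw [Nat.mod_eq_of_lt (by omega)]
      omega
    · rw [show 1 + (b : ℕ) = m + 3 by omega, Nat.mod_self]
      omega
  have : (cycleGraph (m + 3)).Adj i j ↔ i - j = 1 ∨ j - i = 1 := by
    exact cycleGraph_adj (n := m + 1)
  rw [this, key i j, key j i]
  tauto

private lemma isCycleSubgraph_of_isCycle {V : Type*} {G : SimpleGraph V} {x : V}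
    {w : G.Walk x x} (hw : w.IsCycle) : w.toSubgraph.IsCycleSubgraph := by
  obtain ⟨m, hm⟩ : ∃ m, w.length = m + 3 := ⟨w.length - 3, by have := hw.three_le_length; omega⟩
  refine ⟨m + 3, by omega, ?_⟩
  have hgv : ∀ i : Fin (m + 3), w.getVert (i : ℕ) ∈ w.toSubgraph.verts := fun i =>
    (w.mem_verts_toSubgraph).mpr
      (Walk.mem_support_iff_exists_getVert.mpr ⟨(i : ℕ), rfl, by omega⟩)
  set e : Fin (m + 3) → w.toSubgraph.verts := fun i => ⟨w.getVert (i : ℕ), hgv i⟩ with he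
  have hinj : Function.Injective e := by
    intro i j hij
    have : w.getVert (i : ℕ) = w.getVert (j : ℕ) := congrArg Subtype.val hij
    exact Fin.ext (cycle_getVert_inj hw (by omega) (by omega) this)
  have hsurj : Function.Surjective e := by
    rintro ⟨z, hz⟩
    obtain ⟨n, hn, hnle⟩ := Walk.mem_support_iff_exists_getVert.mp
      ((w.mem_verts_toSubgraph).mp hz)
    rcases Nat.lt_or_ge n w.length with hlt | hge
    · exact ⟨⟨n, by omega⟩, Subtype.ext hn⟩
    · refine ⟨⟨0, by omega⟩, Subtype.ext ?_⟩
      have : n = w.length := by omega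
      subst this
      simpa [he, Walk.getVert_zero, Walk.getVert_length] using hn
  have hadj : ∀ i j : Fin (m + 3),
      w.toSubgraph.coe.Adj (e i) (e j) ↔ (cycleGraph (m + 3)).Adj i j := by
    intro i j
    rw [Subgraph.coe_adj]
    simp only [he]
    rw [Walk.toSubgraph_adj_iff, fin_cycle_adj]
    constructor
    · rintro ⟨k, hk, hklt⟩
      rw [Sym2.eq_iff] at hk
      rcases hk with ⟨h1, h2⟩ | ⟨h1, h2⟩
      · left
        have hki : k = (i : ℕ) := cycle_getVert_inj hw hklt (by omega) h1
        rcases Nat.lt_or_ge (k + 1) w.length with hlt | hge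
        · left
          have := cycle_getVert_inj hw hlt (by omega) h2
          omega
        · right
          have hkl : k + 1 = w.length := by omega
          have h0 : w.getVert 0 = w.getVert (j : ℕ) := by
            rw [Walk.getVert_zero, ← h2, hkl, Walk.getVert_length]
          have := cycle_getVert_inj hw (by omega) (by omega) h0
          omega
      · right
        have hki : k = (j : ℕ) := cycle_getVert_inj hw hklt (by omega) h1
        rcases Nat.lt_or_ge (k + 1) w.length with hlt | hge
        · left
          have := cycle_getVert_inj hw hlt (by omega) h2
          omega
        · right
          have hkl : k + 1 = w.length := by omega
          have h0 : w.getVert 0 = w.getVert (i : ℕ) := by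
            rw [Walk.getVert_zero, ← h2, hkl, Walk.getVert_length]
          have := cycle_getVert_inj hw (by omega) (by omega) h0
          omega
    · rintro ((h | ⟨h1, h2⟩) | (h | ⟨h1, h2⟩))
      · exact ⟨(i : ℕ), by rw [h], by omega⟩
      · refine ⟨(i : ℕ), ?_, by omega⟩
        rw [show (i : ℕ) + 1 = w.length by omega, Walk.getVert_length]
        rw [show (j : ℕ) = 0 from h2, Walk.getVert_zero]
      · refine ⟨(j : ℕ), ?_, by omega⟩
        rw [h, Sym2.eq_swap]
      · refine ⟨(j : ℕ), ?_, by omega⟩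
        rw [show (j : ℕ) + 1 = w.length by omega, Walk.getVert_length]
        rw [show (i : ℕ) = 0 from h2, Walk.getVert_zero, Sym2.eq_swap]
  have iso : cycleGraph (m + 3) ≃g w.toSubgraph.coe :=
    ⟨Equiv.ofBijective e ⟨hinj, hsurj⟩, fun {i j} => hadj i j⟩
  exact ⟨iso.symm⟩

private lemma graphW_adj_inl_inl {m : ℕ} {i j : Fin 3} (h : i ≠ j) :
    (GraphW m).Adj (Sum.inl i) (Sum.inl j) := by
  refine (SimpleGraph.fromRel_adj _ _ _).mpr ⟨by simp [h], Or.inl h⟩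

private lemma graphW_adj_inl_inr {m : ℕ} {i : Fin 3} {j : Fin m} (h : (j : ℕ) = 0) :
    (GraphW m).Adj (Sum.inl i) (Sum.inr (i, j)) := by
  refine (SimpleGraph.fromRel_adj _ _ _).mpr ⟨by simp, Or.inl ⟨rfl, h⟩⟩

private lemma graphW_adj_inr_inr {m : ℕ} {i : Fin 3} {j j' : Fin m}
    (h : (j : ℕ) + 1 = (j' : ℕ)) : (GraphW m).Adj (Sum.inr (i, j)) (Sum.inr (i, j')) := by
  refine (SimpleGraph.fromRel_adj _ _ _).mpr ⟨?_, Or.inl ⟨rfl, h⟩⟩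
  simp only [ne_eq, Sum.inr.injEq, Prod.mk.injEq, not_and]
  intro _
  intro hj
  rw [hj] at h
  omega


/-- If a finite simple connected graph `G` contains exactly one cycle, that cycle is a
3-cycle, and `G` has neither an `I` minor nor an `R` minor, then `G` is isomorphic to
a subgraph of `W_m` for some `m ∈ ℕ`. -/
theorem unicyclic_subgraph_of_W {V : Type*} [Fintype V] (G : SimpleGraph V)
    (hconn : G.Connected) (C : G.Subgraph)
    (hC : Nonempty (C.coe ≃g SimpleGraph.cycleGraph 3))
    (huniq : ∀ D : G.Subgraph, D.IsCycleSubgraph → D = C)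
    (hI : ¬ GraphI.IsMinorOf G) (hR : ¬ GraphR.IsMinorOf G) :
    ∃ (m : ℕ) (f : V → Fin 3 ⊕ Fin 3 × Fin m),
      Function.Injective f ∧ ∀ a b, G.Adj a b → (GraphW m).Adj (f a) (f b) := by
  classical
  -- extract the triangle
  obtain ⟨a, b, c, hab, hac, hbc, hCab⟩ :
      ∃ a b c : V, G.Adj a b ∧ G.Adj a c ∧ G.Adj b c ∧ C.Adj a b := by
    obtain ⟨e⟩ := hC
    have key : ∀ i j : Fin 3, i ≠ j →
        C.Adj ((e.symm i : C.verts) : V) ((e.symm j : C.verts) : V) := by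
      intro i j hij
      have h3 : (SimpleGraph.cycleGraph 3).Adj i j := by
        rw [SimpleGraph.cycleGraph_three_eq_top]; exact hij
      have := e.symm.map_adj_iff.mpr h3
      exact this
    exact ⟨_, _, _, C.adj_sub (key 0 1 (by decide)), C.adj_sub (key 0 2 (by decide)),
      C.adj_sub (key 1 2 (by decide)), key 0 1 (by decide)⟩
  have hne_ab : a ≠ b := hab.ne
  have hne_ac : a ≠ c := hac.ne
  have hne_bc : b ≠ c := hbc.ne
  set T : SimpleGraph V := G.deleteEdges {s(a, b)} with hT_def
  have hTle : T ≤ G := G.deleteEdges_le _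
  have hT_adj : ∀ x y, T.Adj x y ↔ G.Adj x y ∧ s(x, y) ≠ s(a, b) := by
    intro x y; rw [hT_def, SimpleGraph.deleteEdges_adj]; simp
  have hTac : T.Adj a c := by
    rw [hT_adj]
    refine ⟨hac, fun h => ?_⟩
    rw [Sym2.eq_iff] at h
    rcases h with ⟨_, h⟩ | ⟨h, _⟩ <;> simp_all
  have hTbc : T.Adj b c := by
    rw [hT_adj]
    refine ⟨hbc, fun h => ?_⟩
    rw [Sym2.eq_iff] at h
    rcases h with ⟨h, _⟩ | ⟨_, h⟩ <;> simp_all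
  have hnTab : ¬ T.Adj a b := by rw [hT_adj]; simp
  -- T is connected
  have hstepR : ∀ {x y : V}, G.Adj x y → T.Reachable x y := by
    intro x y hxy
    by_cases h : s(x, y) = s(a, b)
    · rw [Sym2.eq_iff] at h
      rcases h with ⟨rfl, rfl⟩ | ⟨rfl, rfl⟩
      · exact (hTac.reachable).trans hTbc.symm.reachable
      · exact (hTbc.reachable).trans hTac.symm.reachable
    · exact SimpleGraph.Adj.reachable (by rw [hT_adj]; exact ⟨hxy, h⟩)
  have hTconn : T.Connected := by
    rw [SimpleGraph.connected_iff]
    refine ⟨fun x y => ?_, hconn.nonempty⟩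
    obtain ⟨p⟩ := hconn.preconnected x y
    induction p with
    | nil => exact SimpleGraph.Reachable.refl _
    | cons h q ih => exact (hstepR h).trans ih
  -- T is acyclic, hence a tree
  have hacyc : T.IsAcyclic := by
    intro x w hw
    have hw' : (w.mapLe hTle).IsCycle := hw.mapLe hTle
    have hDC := huniq _ (isCycleSubgraph_of_isCycle hw')
    have hadjD : (w.mapLe hTle).toSubgraph.Adj a b := by rw [hDC]; exact hCab
    rw [SimpleGraph.Walk.mapLe, SimpleGraph.Walk.toSubgraph_map] at hadjD
    obtain ⟨u', v', huv, hu, hv⟩ := hadjD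
    simp only [SimpleGraph.Hom.ofLE_apply] at hu hv
    subst hu hv
    exact hnTab (w.toSubgraph.adj_sub huv)
  have hTree : T.IsTree := ⟨hTconn, hacyc⟩
  -- unique paths to c
  choose pathTo hpath huniqp using fun v => hTree.existsUnique_path v c
  set d : V → ℕ := fun v => (pathTo v).length with hd_def
  have hd : ∀ v, d v = (pathTo v).length := fun v => rfl
  have hpathc : pathTo c = SimpleGraph.Walk.nil :=
    (huniqp c SimpleGraph.Walk.nil SimpleGraph.Walk.IsPath.nil).symm
  have hdc : d c = 0 := by rw [hd, hpathc]; rfl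
  have hd0 : ∀ v, d v = 0 → v = c := fun v h => SimpleGraph.Walk.eq_of_length_eq_zero h
  -- parent function
  have hexpar : ∀ v : V, ∃ w : V, v ≠ c →
      ∃ h : T.Adj v w, pathTo v = SimpleGraph.Walk.cons h (pathTo w) := by
    intro v
    by_cases hv : v = c
    · exact ⟨v, fun h => absurd hv h⟩
    · obtain ⟨w, h, q, hq⟩ := SimpleGraph.Walk.exists_eq_cons_of_ne hv (pathTo v)
      have hqpath : q.IsPath := by
        have := hpath v
        rw [hq, SimpleGraph.Walk.cons_isPath_iff] at this
        exact this.1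
      exact ⟨w, fun _ => ⟨h, by rw [hq, huniqp w q hqpath]⟩⟩
  choose par hpar using hexpar
  -- the second vertex of a path is the parent
  have hsecond : ∀ (v w : V) (h : T.Adj v w) (q : T.Walk w c),
      pathTo v = SimpleGraph.Walk.cons h q → par v = w := by
    intro v w h q hq
    have hvc : v ≠ c := by
      rintro rfl
      rw [hpathc] at hq
      exact absurd (congrArg SimpleGraph.Walk.length hq) (by simp)
    obtain ⟨h', hcons⟩ := hpar v hvc
    have := congrArg (fun p => SimpleGraph.Walk.getVert p 1) (hcons.symm.trans hq)
    simpa [SimpleGraph.Walk.getVert_cons_succ, SimpleGraph.Walk.getVert_zero] using this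
  have hd_par : ∀ v, v ≠ c → T.Adj v (par v) ∧ d v = d (par v) + 1 := by
    intro v hvc
    obtain ⟨h, hcons⟩ := hpar v hvc
    exact ⟨h, by rw [hd, hd, hcons, SimpleGraph.Walk.length_cons]⟩
  -- membership of z in pathTo v
  have hmemsub : ∀ v z (hz : z ∈ (pathTo v).support),
      d z ≤ d v ∧ (pathTo z).support ⊆ (pathTo v).support := by
    intro v z hz
    have hdrop : (pathTo v).dropUntil z hz = pathTo z :=
      huniqp z _ ((hpath v).dropUntil hz)
    constructor
    · rw [hd, hd, ← hdrop]; exact SimpleGraph.Walk.length_dropUntil_le _ hz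
    · rw [← hdrop]; exact SimpleGraph.Walk.support_dropUntil_subset _ hz
  -- step dichotomy
  have hstep2 : ∀ u v, T.Adj u v → (v ≠ c ∧ par v = u) ∨ (u ≠ c ∧ par u = v) := by
    intro u v h
    by_cases hv : v ∈ (pathTo u).support
    · right
      have hvu : v ≠ u := h.ne'
      have hdrop : (pathTo u).dropUntil v hv = pathTo v :=
        huniqp v _ ((hpath u).dropUntil hv)
      have hu_not : u ∉ (pathTo v).support := by
        intro hu
        have hnodup := (hpath u).support_nodup
        rw [← SimpleGraph.Walk.take_spec (pathTo u) hv, SimpleGraph.Walk.support_append]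
          at hnodup
        have hdisj := List.disjoint_of_nodup_append hnodup
        refine hdisj (SimpleGraph.Walk.start_mem_support _) ?_
        rw [hdrop]
        have h2 : u ∈ (pathTo v).support := hu
        rw [SimpleGraph.Walk.support_eq_cons] at h2
        rcases List.mem_cons.mp h2 with h3 | h3
        · exact absurd h3.symm hvu
        · exact h3
      have hpath' : (SimpleGraph.Walk.cons h (pathTo v)).IsPath := (hpath v).cons hu_not
      have hPu : pathTo u = SimpleGraph.Walk.cons h (pathTo v) := (huniqp u _ hpath').symm
      have huc : u ≠ c := by
        rintro rfl
        rw [hpathc] at hPu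
        exact absurd (congrArg SimpleGraph.Walk.length hPu) (by simp)
      exact ⟨huc, hsecond u v h (pathTo v) hPu⟩
    · left
      have hpath' : (SimpleGraph.Walk.cons h.symm (pathTo u)).IsPath := (hpath u).cons hv
      have hPv : pathTo v = SimpleGraph.Walk.cons h.symm (pathTo u) := (huniqp v _ hpath').symm
      have hvc : v ≠ c := by
        rintro rfl
        rw [hpathc] at hPv
        exact absurd (congrArg SimpleGraph.Walk.length hPv) (by simp)
      exact ⟨hvc, hsecond v u h.symm (pathTo u) hPv⟩
  -- a neighbor of v other than its parent is not on pathTo v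
  have hnadj : ∀ v x, T.Adj v x → x ≠ par v → x ∉ (pathTo v).support := by
    intro v x h hne hx
    have hvc : v ≠ c := by
      rintro rfl
      rw [hpathc] at hx
      simp at hx
      subst hx
      exact h.ne rfl
    by_cases hxc : x = c
    · have h' : T.Adj v c := hxc ▸ h
      have hp1 : (SimpleGraph.Walk.cons h' SimpleGraph.Walk.nil).IsPath := by
        rw [SimpleGraph.Walk.cons_isPath_iff]
        refine ⟨SimpleGraph.Walk.IsPath.nil, by simp [hvc]⟩
      have : par v = c :=
        hsecond v c h' SimpleGraph.Walk.nil (huniqp v _ hp1).symm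
      rw [hxc] at hne
      exact hne this.symm
    · rcases hstep2 v x h with ⟨hxc', hpx⟩ | ⟨_, hpv⟩
      · have h1 := (hd_par x hxc').2
        rw [hpx] at h1
        have h2 := (hmemsub v x hx).1
        omega
      · exact hne hpv.symm
  -- triangle vertices and paths to them
  have hpatha : pathTo a = SimpleGraph.Walk.cons hTac SimpleGraph.Walk.nil := by
    refine (huniqp a _ ?_).symm
    show (SimpleGraph.Walk.cons hTac SimpleGraph.Walk.nil).IsPath
    rw [SimpleGraph.Walk.cons_isPath_iff]
    exact ⟨SimpleGraph.Walk.IsPath.nil, by simp [hne_ac]⟩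
  have hpathb : pathTo b = SimpleGraph.Walk.cons hTbc SimpleGraph.Walk.nil := by
    refine (huniqp b _ ?_).symm
    show (SimpleGraph.Walk.cons hTbc SimpleGraph.Walk.nil).IsPath
    rw [SimpleGraph.Walk.cons_isPath_iff]
    exact ⟨SimpleGraph.Walk.IsPath.nil, by simp [hne_bc]⟩
  have hpara : par a = c := hsecond a c hTac SimpleGraph.Walk.nil hpatha
  have hparb : par b = c := hsecond b c hTbc SimpleGraph.Walk.nil hpathb
  have hda : d a = 1 := by rw [hd, hpatha]; rfl
  have hdb : d b = 1 := by rw [hd, hpathb]; rfl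
  -- at most one extra neighbor of c
  have hA : ∀ x y, T.Adj c x → T.Adj c y → x ≠ a → x ≠ b → y ≠ a → y ≠ b → x ≠ y → False := by
    intro x y h1 h2 hxa hxb hya hyb hxy
    refine hR (graphR_minor (S := {c}) (u := c) (v := c) (t1 := a) (t2 := b) (x := x) (y := y)
      (induce_singleton_connected G c) rfl rfl ?_ ?_ ?_ ?_
      hne_ab (fun h => hxa h.symm) (fun h => hya h.symm) (fun h => hxb h.symm)
      (fun h => hyb h.symm) hxy hac.symm hbc.symm hab (hTle h1) (hTle h2))
    · simp only [Set.mem_singleton_iff]; exact hne_ac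
    · simp only [Set.mem_singleton_iff]; exact hne_bc
    · simp only [Set.mem_singleton_iff]; exact h1.ne'
    · simp only [Set.mem_singleton_iff]; exact h2.ne'
  -- at most one extra neighbor of a (besides c), similarly for b
  have hB : ∀ x y, T.Adj a x → T.Adj a y → x ≠ c → y ≠ c → x ≠ y → False := by
    intro x y h1 h2 hxc hyc hxy
    have hxb : x ≠ b := by rintro rfl; exact hnTab h1
    have hyb : y ≠ b := by rintro rfl; exact hnTab h2
    refine hR (graphR_minor (S := {a}) (u := a) (v := a) (t1 := b) (t2 := c) (x := x) (y := y)
      (induce_singleton_connected G a) rfl rfl ?_ ?_ ?_ ?_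
      hne_bc (fun h => hxb h.symm) (fun h => hyb h.symm) (fun h => hxc h.symm)
      (fun h => hyc h.symm) hxy hab hac hbc (hTle h1) (hTle h2))
    · simp only [Set.mem_singleton_iff]; exact hne_ab.symm
    · simp only [Set.mem_singleton_iff]; exact hne_ac.symm
    · simp only [Set.mem_singleton_iff]; exact h1.ne'
    · simp only [Set.mem_singleton_iff]; exact h2.ne'
  have hBb : ∀ x y, T.Adj b x → T.Adj b y → x ≠ c → y ≠ c → x ≠ y → False := by
    intro x y h1 h2 hxc hyc hxy
    have hxa : x ≠ a := by rintro rfl; exact hnTab h1.symm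
    have hya : y ≠ a := by rintro rfl; exact hnTab h2.symm
    refine hR (graphR_minor (S := {b}) (u := b) (v := b) (t1 := a) (t2 := c) (x := x) (y := y)
      (induce_singleton_connected G b) rfl rfl ?_ ?_ ?_ ?_
      hne_ac (fun h => hxa h.symm) (fun h => hya h.symm) (fun h => hxc h.symm)
      (fun h => hyc h.symm) hxy hab.symm hbc hac (hTle h1) (hTle h2))
    · simp only [Set.mem_singleton_iff]; exact hne_ab
    · simp only [Set.mem_singleton_iff]; exact hne_bc.symm
    · simp only [Set.mem_singleton_iff]; exact h1.ne'
    · simp only [Set.mem_singleton_iff]; exact h2.ne'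
  -- path from any non-triangle vertex to the first triangle vertex
  have hP : ∀ n v, d v ≤ n → v ≠ a → v ≠ b → v ≠ c →
      ∃ (u : V) (Q : T.Walk v u), Q.IsPath ∧ (u = a ∨ u = b ∨ u = c) ∧
        (∀ z ∈ Q.support, z ≠ u → (z ≠ a ∧ z ≠ b ∧ z ≠ c)) ∧
        v ∈ Q.support ∧ u ∈ Q.support ∧
        (∀ z ∈ Q.support, z ∈ (pathTo v).support) := by
    intro n
    induction n with
    | zero =>
      intro v h0 _ _ hvc
      exact absurd (hd0 v (Nat.le_zero.mp h0)) hvc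
    | succ n ih =>
      intro v hdn hva hvb hvc
      obtain ⟨hadj, hcons⟩ := hpar v hvc
      have hdv := (hd_par v hvc).2
      by_cases hw : par v = a ∨ par v = b ∨ par v = c
      · refine ⟨par v, SimpleGraph.Walk.cons hadj SimpleGraph.Walk.nil, ?_, hw, ?_, ?_, ?_, ?_⟩
        · rw [SimpleGraph.Walk.cons_isPath_iff]
          exact ⟨SimpleGraph.Walk.IsPath.nil, by simp [hadj.ne]⟩
        · intro z hz hzu
          simp only [SimpleGraph.Walk.support_cons, SimpleGraph.Walk.support_nil,
            List.mem_cons, List.not_mem_nil, or_false] at hz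
          rcases hz with rfl | rfl
          · exact ⟨hva, hvb, hvc⟩
          · exact absurd rfl hzu
        · simp
        · simp
        · intro z hz
          simp only [SimpleGraph.Walk.support_cons, SimpleGraph.Walk.support_nil,
            List.mem_cons, List.not_mem_nil, or_false] at hz
          rcases hz with rfl | rfl
          · exact SimpleGraph.Walk.start_mem_support _
          · rw [hcons]
            rw [SimpleGraph.Walk.support_cons]
            exact List.mem_cons_of_mem _ (SimpleGraph.Walk.start_mem_support _)
      · push_neg at hw
        have hdparle : d (par v) ≤ n := by omega
        obtain ⟨u, Q, hQpath, hu, hQS, hvQ', huQ', hQsub⟩ :=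
          ih (par v) hdparle hw.1 hw.2.1 hw.2.2
        have hvQ : v ∉ Q.support := by
          intro hvin
          have h1 := (hmemsub (par v) v (hQsub v hvin)).1
          omega
        refine ⟨u, SimpleGraph.Walk.cons hadj Q, hQpath.cons hvQ, hu, ?_, ?_, ?_, ?_⟩
        · intro z hz hzu
          rw [SimpleGraph.Walk.support_cons] at hz
          rcases List.mem_cons.mp hz with rfl | hz'
          · exact ⟨hva, hvb, hvc⟩
          · exact hQS z hz' hzu
        · simp
        · rw [SimpleGraph.Walk.support_cons]
          exact List.mem_cons_of_mem _ huQ'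
        · intro z hz
          rw [SimpleGraph.Walk.support_cons] at hz
          rcases List.mem_cons.mp hz with rfl | hz'
          · exact SimpleGraph.Walk.start_mem_support _
          · rw [hcons, SimpleGraph.Walk.support_cons]
            exact List.mem_cons_of_mem _ (hQsub z hz')
  -- every non-triangle vertex has at most one child
  have hCdeg : ∀ v, v ≠ a → v ≠ b → v ≠ c → ∀ x y, T.Adj v x → T.Adj v y →
      x ≠ y → x ≠ par v → y ≠ par v → False := by
    intro v hva hvb hvc x y hx hy hxy hxp hyp
    have hxnotin : x ∉ (pathTo v).support := hnadj v x hx hxp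
    have hynotin : y ∉ (pathTo v).support := hnadj v y hy hyp
    have hxc' : x ≠ c := fun h => hxnotin (by rw [h]; exact SimpleGraph.Walk.end_mem_support _)
    have hyc' : y ≠ c := fun h => hynotin (by rw [h]; exact SimpleGraph.Walk.end_mem_support _)
    have hpx : par x = v := by
      rcases hstep2 v x hx with ⟨_, h1⟩ | ⟨_, h1⟩
      · exact h1
      · exact absurd h1.symm hxp
    have hpy : par y = v := by
      rcases hstep2 v y hy with ⟨_, h1⟩ | ⟨_, h1⟩
      · exact h1
      · exact absurd h1.symm hyp
    have hxa : x ≠ a := by rintro rfl; rw [hpara] at hpx; exact hvc hpx.symm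
    have hxb : x ≠ b := by rintro rfl; rw [hparb] at hpx; exact hvc hpx.symm
    have hya : y ≠ a := by rintro rfl; rw [hpara] at hpy; exact hvc hpy.symm
    have hyb : y ≠ b := by rintro rfl; rw [hparb] at hpy; exact hvc hpy.symm
    obtain ⟨u, Q, hQpath, hu, hQS, hvQ', huQ', hQsub⟩ := hP (d v) v le_rfl hva hvb hvc
    have hxQ : x ∉ {z | z ∈ Q.support} := fun h => hxnotin (hQsub x h)
    have hyQ : y ∉ {z | z ∈ Q.support} := fun h => hynotin (hQsub y h)
    have hSconn : (G.induce {z | z ∈ Q.support}).Connected := by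
      have h1 := (Q.mapLe hTle).connected_induce_support
      have h2 : (Q.mapLe hTle).support = Q.support := by
        rw [SimpleGraph.Walk.mapLe, SimpleGraph.Walk.support_map,
          show ⇑(SimpleGraph.Hom.ofLE hTle) = id from rfl, List.map_id]
      rwa [h2] at h1
    have hGvx : G.Adj v x := hTle hx
    have hGvy : G.Adj v y := hTle hy
    rcases hu with rfl | rfl | rfl
    · -- u = a
      have htB : b ∉ {z | z ∈ Q.support} := fun h => (hQS b h hne_ab.symm).2.1 rfl
      have htC : c ∉ {z | z ∈ Q.support} := fun h => (hQS c h hne_ac.symm).2.2 rfl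
      exact hR (graphR_minor (S := {z | z ∈ Q.support}) (u := u) (v := v)
        (t1 := b) (t2 := c) (x := x) (y := y) hSconn huQ' hvQ' htB htC hxQ hyQ
        hne_bc (fun h => hxb h.symm) (fun h => hyb h.symm) (fun h => hxc' h.symm)
        (fun h => hyc' h.symm) hxy hab hac hbc hGvx hGvy)
    · -- u = b
      have htA : a ∉ {z | z ∈ Q.support} := fun h => (hQS a h hne_ab).1 rfl
      have htC : c ∉ {z | z ∈ Q.support} := fun h => (hQS c h hne_bc.symm).2.2 rfl
      exact hR (graphR_minor (S := {z | z ∈ Q.support}) (u := u) (v := v)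
        (t1 := a) (t2 := c) (x := x) (y := y) hSconn huQ' hvQ' htA htC hxQ hyQ
        hne_ac (fun h => hxa h.symm) (fun h => hya h.symm) (fun h => hxc' h.symm)
        (fun h => hyc' h.symm) hxy hab.symm hbc hac hGvx hGvy)
    · -- u = c
      have htA : a ∉ {z | z ∈ Q.support} := fun h => (hQS a h hne_ac).1 rfl
      have htB : b ∉ {z | z ∈ Q.support} := fun h => (hQS b h hne_bc).2.1 rfl
      exact hR (graphR_minor (S := {z | z ∈ Q.support}) (u := u) (v := v)
        (t1 := a) (t2 := b) (x := x) (y := y) hSconn huQ' hvQ' htA htB hxQ hyQ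
        hne_ab (fun h => hxa h.symm) (fun h => hya h.symm) (fun h => hxb h.symm)
        (fun h => hyb h.symm) hxy hac.symm hbc.symm hab hGvx hGvy)
  -- children are unique
  have hchild : ∀ w, w ≠ c → ∀ x y, par x = w → par y = w → x ≠ c → y ≠ c → x = y := by
    intro w hwc x y hx hy hxc hyc
    by_contra hxy
    have hxw : T.Adj x w := by rw [← hx]; exact (hd_par x hxc).1
    have hyw : T.Adj y w := by rw [← hy]; exact (hd_par y hyc).1
    by_cases hwa : w = a
    · subst hwa; exact hB x y hxw.symm hyw.symm hxc hyc hxy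
    by_cases hwb : w = b
    · subst hwb; exact hBb x y hxw.symm hyw.symm hxc hyc hxy
    have hdx : d x = d w + 1 := by rw [← hx]; exact (hd_par x hxc).2
    have hdy : d y = d w + 1 := by rw [← hy]; exact (hd_par y hyc).2
    have hdw : d w = d (par w) + 1 := (hd_par w hwc).2
    have hxpw : x ≠ par w := by
      intro h
      have : d (par w) = d w + 1 := by rw [← h]; exact hdx
      omega
    have hypw : y ≠ par w := by
      intro h
      have : d (par w) = d w + 1 := by rw [← h]; exact hdy
      omega
    exact hCdeg w hwa hwb hwc x y hxw.symm hyw.symm hxy hxpw hypw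
  have hchildc : ∀ x y, par x = c → par y = c → x ≠ a → x ≠ b → y ≠ a → y ≠ b →
      x ≠ c → y ≠ c → x = y := by
    intro x y hx hy hxa hxb hya hyb hxc hyc
    by_contra hxy
    have hxw : T.Adj c x := by
      have := (hd_par x hxc).1; rw [hx] at this; exact this.symm
    have hyw : T.Adj c y := by
      have := (hd_par y hyc).1; rw [hy] at this; exact this.symm
    exact hA x y hxw hyw hxa hxb hya hyb hxy
  -- the depth-1 ancestor
  set g : V → V := fun v => (pathTo v).getVert (d v - 1) with hg_def
  have hg : ∀ v, g v = (pathTo v).getVert (d v - 1) := fun v => rfl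
  have hg1 : ∀ v, d v = 1 → g v = v := by
    intro v h1
    rw [hg, h1]
    exact SimpleGraph.Walk.getVert_zero _
  have hg2 : ∀ v, v ≠ c → par v ≠ c → g v = g (par v) := by
    intro v hvc hpvc
    obtain ⟨hadj, hcons⟩ := hpar v hvc
    have hdv := (hd_par v hvc).2
    have hdp1 : 1 ≤ d (par v) := by
      rcases Nat.eq_zero_or_pos (d (par v)) with h | h
      · exact absurd (hd0 _ h) hpvc
      · omega
    rw [hg, hg, hcons]
    rw [show d v - 1 = (d (par v) - 1) + 1 by omega, SimpleGraph.Walk.getVert_cons_succ]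
  have hg3 : ∀ n v, d v ≤ n → v ≠ c → d (g v) = 1 ∧ par (g v) = c ∧ g v ≠ c := by
    intro n
    induction n with
    | zero => intro v h0 hvc; exact absurd (hd0 v (Nat.le_zero.mp h0)) hvc
    | succ n ih =>
      intro v hdn hvc
      have hdv := (hd_par v hvc).2
      by_cases hpvc : par v = c
      · have hdv1 : d v = 1 := by rw [hpvc, hdc] at hdv; omega
        rw [hg1 v hdv1]
        exact ⟨hdv1, hpvc, hvc⟩
      · rw [hg2 v hvc hpvc]
        exact ih (par v) (by omega) hpvc
  -- injectivity core: same depth and same branch implies equal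
  have hinjcore : ∀ n u v, d u ≤ n → u ≠ c → v ≠ c → d u = d v → g u = g v → u = v := by
    intro n
    induction n with
    | zero => intro u v h0 huc _ _ _; exact absurd (hd0 u (Nat.le_zero.mp h0)) huc
    | succ n ih =>
      intro u v hdn huc hvc hdeq hgeq
      by_cases h1 : d u = 1
      · have h1v : d v = 1 := by omega
        rw [hg1 u h1, hg1 v h1v] at hgeq
        exact hgeq
      · have hdu2 : 2 ≤ d u := by
          have : d u ≠ 0 := fun h => huc (hd0 u h)
          omega
        have hduv := (hd_par u huc).2
        have hdvv := (hd_par v hvc).2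
        have hpuc : par u ≠ c := by
          intro h
          rw [h, hdc] at hduv
          omega
        have hpvc : par v ≠ c := by
          intro h
          rw [h, hdc] at hdvv
          omega
        have hgg : g (par u) = g (par v) := by
          rw [← hg2 u huc hpuc, ← hg2 v hvc hpvc]
          exact hgeq
        have hpp : par u = par v := ih (par u) (par v) (by omega) hpuc hpvc (by omega) hgg
        exact hchild (par u) hpuc u v rfl hpp.symm huc hvc
  -- the embedding
  have hNV : Nonempty V := hconn.nonempty
  have hdlt : ∀ v, d v < Fintype.card V := fun v => (hpath v).length_lt
  set f : V → Fin 3 ⊕ Fin 3 × Fin (Fintype.card V) := fun v =>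
    if v = a then Sum.inl 0 else if v = b then Sum.inl 1 else if v = c then Sum.inl 2
    else if g v = a then Sum.inr (0, ⟨d v - 2, Nat.lt_of_le_of_lt (Nat.sub_le _ _) (hdlt v)⟩)
    else if g v = b then Sum.inr (1, ⟨d v - 2, Nat.lt_of_le_of_lt (Nat.sub_le _ _) (hdlt v)⟩)
    else Sum.inr (2, ⟨d v - 1, Nat.lt_of_le_of_lt (Nat.sub_le _ _) (hdlt v)⟩) with hf_def
  have hfa : f a = Sum.inl 0 := by simp [hf_def]
  have hfb : f b = Sum.inl 1 := by simp [hf_def, hne_ab.symm]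
  have hfc : f c = Sum.inl 2 := by simp [hf_def, hne_ac.symm, hne_bc.symm]
  have hfg_a : ∀ v (hva : v ≠ a) (hvb : v ≠ b) (hvc : v ≠ c), g v = a →
      f v = Sum.inr (0, ⟨d v - 2, Nat.lt_of_le_of_lt (Nat.sub_le _ _) (hdlt v)⟩) := by
    intro v hva hvb hvc hgv
    simp only [hf_def]
    rw [if_neg hva, if_neg hvb, if_neg hvc, if_pos hgv]
  have hfg_b : ∀ v (hva : v ≠ a) (hvb : v ≠ b) (hvc : v ≠ c), g v ≠ a → g v = b →
      f v = Sum.inr (1, ⟨d v - 2, Nat.lt_of_le_of_lt (Nat.sub_le _ _) (hdlt v)⟩) := by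
    intro v hva hvb hvc hgv hgv'
    simp only [hf_def]
    rw [if_neg hva, if_neg hvb, if_neg hvc, if_neg hgv, if_pos hgv']
  have hfg_o : ∀ v (hva : v ≠ a) (hvb : v ≠ b) (hvc : v ≠ c), g v ≠ a → g v ≠ b →
      f v = Sum.inr (2, ⟨d v - 1, Nat.lt_of_le_of_lt (Nat.sub_le _ _) (hdlt v)⟩) := by
    intro v hva hvb hvc hgv hgv'
    simp only [hf_def]
    rw [if_neg hva, if_neg hvb, if_neg hvc, if_neg hgv, if_neg hgv']
  have hinv0 : ∀ v, f v = Sum.inl 0 → v = a := by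
    intro v hv
    simp only [hf_def] at hv
    split_ifs at hv with h1 h2 h3 h4 h5 <;> first | exact h1 | simp at hv
  have hinv1 : ∀ v, f v = Sum.inl 1 → v = b := by
    intro v hv
    simp only [hf_def] at hv
    split_ifs at hv with h1 h2 h3 h4 h5 <;> first | exact h2 | simp at hv
  have hinv2 : ∀ v, f v = Sum.inl 2 → v = c := by
    intro v hv
    simp only [hf_def] at hv
    split_ifs at hv with h1 h2 h3 h4 h5 <;> first | exact h3 | simp at hv
  have hinvr : ∀ v (i : Fin 3) (j : Fin (Fintype.card V)), f v = Sum.inr (i, j) →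
      (v ≠ a ∧ v ≠ b ∧ v ≠ c) ∧
      ((i = 0 ∧ g v = a ∧ (j : ℕ) = d v - 2) ∨ (i = 1 ∧ g v = b ∧ (j : ℕ) = d v - 2) ∨
        (i = 2 ∧ g v ≠ a ∧ g v ≠ b ∧ (j : ℕ) = d v - 1)) := by
    intro v i j hv
    simp only [hf_def] at hv
    split_ifs at hv with h1 h2 h3 h4 h5
    · rw [Sum.inr.injEq, Prod.mk.injEq] at hv
      obtain ⟨hi, hj⟩ := hv
      exact ⟨⟨h1, h2, h3⟩, Or.inl ⟨hi.symm, h4, by rw [← hj]⟩⟩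
    · rw [Sum.inr.injEq, Prod.mk.injEq] at hv
      obtain ⟨hi, hj⟩ := hv
      exact ⟨⟨h1, h2, h3⟩, Or.inr (Or.inl ⟨hi.symm, h5, by rw [← hj]⟩)⟩
    · rw [Sum.inr.injEq, Prod.mk.injEq] at hv
      obtain ⟨hi, hj⟩ := hv
      exact ⟨⟨h1, h2, h3⟩, Or.inr (Or.inr ⟨hi.symm, h4, h5, by rw [← hj]⟩)⟩
  have hd2 : ∀ v, v ≠ c → (g v = a → v ≠ a → 2 ≤ d v) ∧ (g v = b → v ≠ b → 2 ≤ d v) := by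
    intro v hvc
    have hdv0 : d v ≠ 0 := fun h => hvc (hd0 v h)
    constructor
    · intro hgv hva
      rcases Nat.lt_or_ge (d v) 2 with h | h
      · have h1 : d v = 1 := by omega
        rw [hg1 v h1] at hgv
        exact absurd hgv hva
      · exact h
    · intro hgv hvb
      rcases Nat.lt_or_ge (d v) 2 with h | h
      · have h1 : d v = 1 := by omega
        rw [hg1 v h1] at hgv
        exact absurd hgv hvb
      · exact h
  refine ⟨Fintype.card V, f, ?_, ?_⟩
  · -- injectivity
    intro u v huv
    cases hfu : f u with
    | inl i =>
      have hfv : f v = Sum.inl i := huv.symm.trans hfu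
      fin_cases i
      · rw [hinv0 u hfu, hinv0 v hfv]
      · rw [hinv1 u hfu, hinv1 v hfv]
      · rw [hinv2 u hfu, hinv2 v hfv]
    | inr p =>
      obtain ⟨i, j⟩ := p
      have hfv : f v = Sum.inr (i, j) := huv.symm.trans hfu
      obtain ⟨⟨hua, hub, huc⟩, hcu⟩ := hinvr u i j hfu
      obtain ⟨⟨hva, hvb, hvc⟩, hcv⟩ := hinvr v i j hfv
      rcases hcu with ⟨hi, hgu, hju⟩ | ⟨hi, hgu, hju⟩ | ⟨hi, hgu1, hgu2, hju⟩ <;>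
        rcases hcv with ⟨hi', hgv, hjv⟩ | ⟨hi', hgv, hjv⟩ | ⟨hi', hgv1, hgv2, hjv⟩ <;>
          (try (rw [hi] at hi'; exact absurd hi' (by decide)))
      · have h2u : 2 ≤ d u := (hd2 u huc).1 hgu hua
        have h2v : 2 ≤ d v := (hd2 v hvc).1 hgv hva
        exact hinjcore (d u) u v le_rfl huc hvc (by omega) (hgu.trans hgv.symm)
      · have h2u : 2 ≤ d u := (hd2 u huc).2 hgu hub
        have h2v : 2 ≤ d v := (hd2 v hvc).2 hgv hvb
        exact hinjcore (d u) u v le_rfl huc hvc (by omega) (hgu.trans hgv.symm)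
      · have hdu0 : d u ≠ 0 := fun h => huc (hd0 u h)
        have hdv0 : d v ≠ 0 := fun h => hvc (hd0 v h)
        obtain ⟨hdgu, hpgu, hgcu⟩ := hg3 (d u) u le_rfl huc
        obtain ⟨hdgv, hpgv, hgcv⟩ := hg3 (d v) v le_rfl hvc
        have hgg : g u = g v := hchildc (g u) (g v) hpgu hpgv hgu1 hgu2 hgv1 hgv2 hgcu hgcv
        exact hinjcore (d u) u v le_rfl huc hvc (by omega) hgg
  · -- adjacency
    intro u v huv
    by_cases habe : s(u, v) = s(a, b)
    · rw [Sym2.eq_iff] at habe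
      rcases habe with ⟨rfl, rfl⟩ | ⟨rfl, rfl⟩
      · rw [hfa, hfb]; exact graphW_adj_inl_inl (by decide)
      · rw [hfb, hfa]; exact graphW_adj_inl_inl (by decide)
    · have hTuv : T.Adj u v := by rw [hT_adj]; exact ⟨huv, habe⟩
      clear huv habe
      suffices hdir : ∀ u v, T.Adj u v → v ≠ c → par v = u →
          (GraphW (Fintype.card V)).Adj (f u) (f v) by
        rcases hstep2 u v hTuv with ⟨h1, h2⟩ | ⟨h1, h2⟩
        · exact hdir u v hTuv h1 h2
        · exact (hdir v u hTuv.symm h1 h2).symm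
      clear hTuv
      intro u v hTuv hvc hpv
      have hdv : d v = d u + 1 := by
        have := (hd_par v hvc).2
        rw [hpv] at this
        exact this
      by_cases huc : u = c
      · subst huc
        have hdv1 : d v = 1 := by rw [hdc] at hdv; omega
        by_cases hva : v = a
        · subst hva; rw [hfc, hfa]; exact graphW_adj_inl_inl (by decide)
        by_cases hvb : v = b
        · subst hvb; rw [hfc, hfb]; exact graphW_adj_inl_inl (by decide)
        have hgv : g v = v := hg1 v hdv1
        rw [hfc, hfg_o v hva hvb hvc (by rw [hgv]; exact hva) (by rw [hgv]; exact hvb)]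
        exact graphW_adj_inl_inr (show d v - 1 = 0 by omega)
      by_cases hua : u = a
      · subst hua
        have hva : v ≠ u := hTuv.ne'
        have hvb : v ≠ b := by
          rintro rfl
          rw [hparb] at hpv
          exact hne_ac hpv.symm
        have hpvc : par v ≠ c := by rw [hpv]; exact huc
        have hgv : g v = u := by rw [hg2 v hvc hpvc, hpv, hg1 u hda]
        rw [hfa, hfg_a v hva hvb hvc hgv]
        exact graphW_adj_inl_inr (show d v - 2 = 0 by omega)
      by_cases hub : u = b
      · subst hub
        have hva : v ≠ a := by
          rintro rfl
          rw [hpara] at hpv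
          exact hne_bc hpv.symm
        have hvb : v ≠ u := hTuv.ne'
        have hpvc : par v ≠ c := by rw [hpv]; exact huc
        have hgv : g v = u := by rw [hg2 v hvc hpvc, hpv, hg1 u hdb]
        have hgva : g v ≠ a := by rw [hgv]; exact hua
        rw [hfb, hfg_b v hva hvb hvc hgva hgv]
        exact graphW_adj_inl_inr (show d v - 2 = 0 by omega)
      · have hva : v ≠ a := by rintro rfl; rw [hpara] at hpv; exact huc hpv.symm
        have hvb : v ≠ b := by rintro rfl; rw [hparb] at hpv; exact huc hpv.symm
        have hpvc : par v ≠ c := by rw [hpv]; exact huc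
        have hgveq : g v = g u := by rw [hg2 v hvc hpvc, hpv]
        have hduc : d u ≠ 0 := fun h => huc (hd0 u h)
        by_cases hgua : g u = a
        · have h2u : 2 ≤ d u := (hd2 u huc).1 hgua hua
          rw [hfg_a u hua hub huc hgua, hfg_a v hva hvb hvc (hgveq.trans hgua)]
          exact graphW_adj_inr_inr (show d u - 2 + 1 = d v - 2 by omega)
        by_cases hgub : g u = b
        · have h2u : 2 ≤ d u := (hd2 u huc).2 hgub hub
          rw [hfg_b u hua hub huc hgua hgub,
            hfg_b v hva hvb hvc (by rw [hgveq]; exact hgua) (hgveq.trans hgub)]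
          exact graphW_adj_inr_inr (show d u - 2 + 1 = d v - 2 by omega)
        · rw [hfg_o u hua hub huc hgua hgub,
            hfg_o v hva hvb hvc (by rw [hgveq]; exact hgua) (by rw [hgveq]; exact hgub)]
          exact graphW_adj_inr_inr (show d u - 1 + 1 = d v - 1 by omega)
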